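/- Let X be a measurable space, X_• := X ⊕ PUnit the disjoint sum measurable space, and !X := Σ_{k∈ℕ} X^{(k)} the countable disjoint union of the symmetric powers of X. For each n, the map r_n : X_•^{(n)} → X_•^{(n+1)}, which adds one copy of the root inr(*) to an unordered n-tuple, and the map h_n : X_•^{(n)} → !X, which sends the class of a tuple whose entries of the form inl(x) are exactly x_1,…,x_k to ⟨k, class of (x_1,…,x_k)⟩, are measurable. For every measurable space Y and every family (τ_n) of s-finite transition kernels from X_•^{(n)} to Y satisfying the cone condition τ_{n+1}(r_n(m), ·) = τ_n(m, ·) for all n and all m ∈ X_•^{(n)}, there exists a unique transition kernel τ from !X to Y such that τ(h_n(m), ·) = τ_n(m, ·) for all n and m; moreover this τ is s-finite. Hence !X, with the deterministic kernels of the maps h_n, is the limit of the sequential diagram of rooted symmetric powers in the opposite category of s-finite transition kernels. -/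

import Mathlib

open MeasureTheory ProbabilityTheory
open scoped ProbabilityTheory

/-- The setoid on `Fin n → X` identifying tuples up to permutation of coordinates. -/
def symSetoid (X : Type*) (n : ℕ) : Setoid (Fin n → X) where
  r x y := ∃ σ : Equiv.Perm (Fin n), x ∘ σ = y
  iseqv := by
    refine ⟨fun x => ⟨1, ?_⟩, ?_, ?_⟩
    · funext i; simp
    · rintro x y ⟨σ, rfl⟩
      exact ⟨σ⁻¹, by funext i; simp⟩
    · rintro x y z ⟨σ, rfl⟩ ⟨τ, rfl⟩
      exact ⟨σ * τ, by funext i; simp [Equiv.Perm.mul_apply]⟩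

/-- The symmetric power `X^{(n)}`: the quotient of `Fin n → X` by permutations. -/
def SymPow (X : Type*) (n : ℕ) : Type _ := Quotient (symSetoid X n)

/-- `X^{(n)}` carries the σ-algebra pushed forward along the quotient map
`F : (Fin n → X) → X^{(n)}`. -/
instance SymPow.instMeasurableSpace (X : Type*) [MeasurableSpace X] (n : ℕ) :
    MeasurableSpace (SymPow X n) :=
  MeasurableSpace.map (Quotient.mk (symSetoid X n)) inferInstance

namespace BangAux

lemma measurable_symMk (X : Type*) [MeasurableSpace X] (n : ℕ) :
    Measurable (Quotient.mk (symSetoid X n) : (Fin n → X) → SymPow X n) := fun _ hs => hs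

lemma measurable_of_symQuot {X : Type*} [MeasurableSpace X] {Z : Type*} [MeasurableSpace Z]
    {n : ℕ} {f : SymPow X n → Z}
    (hf : Measurable (fun x : Fin n → X => f (Quotient.mk (symSetoid X n) x))) :
    Measurable f := fun _ hs => hf hs

lemma measurable_sigmaMk' {ι : Type*} {Z : ι → Type*} [∀ i, MeasurableSpace (Z i)] (i : ι) :
    Measurable (Sigma.mk i : Z i → Σ j, Z j) :=
  measurable_iff_le_map.mpr (iInf_le _ i)

lemma measurable_of_sigma {ι : Type*} {Z : ι → Type*} [∀ i, MeasurableSpace (Z i)]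
    {W : Type*} [MeasurableSpace W] {f : (Σ j, Z j) → W}
    (hf : ∀ i, Measurable (fun z : Z i => f ⟨i, z⟩)) : Measurable f := fun s hs =>
  MeasurableSpace.measurableSet_iInf.mpr fun i => hf i hs

/-- The canonical "sorted" representative. -/
abbrev sorted (X : Type*) (n k : ℕ) (y : Fin k → X) : Fin n → X ⊕ PUnit :=
  fun i => if hi : (i : ℕ) < k then Sum.inl (y ⟨i, hi⟩) else Sum.inr PUnit.unit

variable {X : Type*} [MeasurableSpace X]

lemma snoc_sorted (n k : ℕ) (hk : k ≤ n) (y : Fin k → X) :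
    Fin.snoc (sorted X n k y) (Sum.inr PUnit.unit) = sorted X (n + 1) k y := by
  funext i
  refine Fin.lastCases ?_ (fun j => ?_) i
  · simp only [Fin.snoc_last, sorted, Fin.val_last]
    rw [dif_neg (by omega)]
  · simp only [Fin.snoc_castSucc, sorted, Fin.coe_castSucc]

lemma sorted_self (k : ℕ) (y : Fin k → X) :
    sorted X k k y = fun i => Sum.inl (y i) := by
  funext i
  simp [sorted, i.isLt]

lemma symMk_sorted_eq (n k : ℕ) (x : Fin n → X ⊕ PUnit) (S : Finset (Fin n))
    (hS : ∀ i, i ∈ S ↔ (x i).isLeft) (hc : S.card = k) (y : Fin k → X)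
    (hy : ∀ j : Fin k, x (S.orderIsoOfFin hc j) = Sum.inl (y j)) :
    Quotient.mk (symSetoid (X ⊕ PUnit) n) x =
      Quotient.mk (symSetoid (X ⊕ PUnit) n) (sorted X n k y) := by
  have hkn : k ≤ n := by
    subst hc
    simpa using S.card_le_univ
  have hcc : Sᶜ.card = n - k := by
    simp [Finset.card_compl, hc]
  set f : Fin n → Fin n := fun p =>
    if h : (p : ℕ) < k then (S.orderIsoOfFin hc ⟨p, h⟩ : Fin n)
    else (Sᶜ.orderIsoOfFin hcc ⟨(p : ℕ) - k, by have := p.isLt; omega⟩ : Fin n) with hf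
  have hinj : Function.Injective f := by
    intro p q hpq
    by_cases hp : (p : ℕ) < k <;> by_cases hq : (q : ℕ) < k
    · rw [hf] at hpq
      simp only [dif_pos hp, dif_pos hq] at hpq
      have h1 := (S.orderIsoOfFin hc).injective (Subtype.ext hpq)
      exact Fin.ext (by simpa using congrArg Fin.val h1)
    · exfalso
      rw [hf] at hpq
      simp only [dif_pos hp, dif_neg hq] at hpq
      have h1 : (↑(S.orderIsoOfFin hc ⟨p, hp⟩) : Fin n) ∈ S := (S.orderIsoOfFin hc ⟨p, hp⟩).2
      have h2 : (↑(Sᶜ.orderIsoOfFin hcc ⟨(q : ℕ) - k, by have := q.isLt; omega⟩) : Fin n) ∈ Sᶜ :=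
        (Sᶜ.orderIsoOfFin hcc _).2
      rw [hpq] at h1
      exact (Finset.mem_compl.mp h2) h1
    · exfalso
      rw [hf] at hpq
      simp only [dif_neg hp, dif_pos hq] at hpq
      have h1 : (↑(S.orderIsoOfFin hc ⟨q, hq⟩) : Fin n) ∈ S := (S.orderIsoOfFin hc ⟨q, hq⟩).2
      have h2 : (↑(Sᶜ.orderIsoOfFin hcc ⟨(p : ℕ) - k, by have := p.isLt; omega⟩) : Fin n) ∈ Sᶜ :=
        (Sᶜ.orderIsoOfFin hcc _).2
      rw [hpq] at h2
      exact (Finset.mem_compl.mp h2) h1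
    · rw [hf] at hpq
      simp only [dif_neg hp, dif_neg hq] at hpq
      have h1 := (Sᶜ.orderIsoOfFin hcc).injective (Subtype.ext hpq)
      have h2 : (p : ℕ) - k = (q : ℕ) - k := by simpa using congrArg Fin.val h1
      exact Fin.ext (by omega)
  refine Quotient.sound ⟨Equiv.ofBijective f (Finite.injective_iff_bijective.mp hinj), ?_⟩
  funext p
  simp only [Function.comp_apply, Equiv.ofBijective_apply]
  by_cases hp : (p : ℕ) < k
  · rw [hf]
    simp only [dif_pos hp]
    rw [hy ⟨p, hp⟩]
  · rw [hf]
    simp only [dif_neg hp]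
    have h2 : (↑(Sᶜ.orderIsoOfFin hcc ⟨(p : ℕ) - k, by have := p.isLt; omega⟩) : Fin n) ∈ Sᶜ :=
      (Sᶜ.orderIsoOfFin hcc _).2
    have h3 : ¬ (x ↑(Sᶜ.orderIsoOfFin hcc ⟨(p : ℕ) - k, by have := p.isLt; omega⟩)).isLeft := by
      rw [← hS]
      exact Finset.mem_compl.mp h2
    rcases hxc : x ↑(Sᶜ.orderIsoOfFin hcc ⟨(p : ℕ) - k, by have := p.isLt; omega⟩) with a | u
    · rw [hxc] at h3; simp at h3
    · cases u
      simp only [sorted, dif_neg hp]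

/-- Embedding of `X^{(k)}` into `(X ⊕ PUnit)^{(k)}`. -/
def symEmb (X : Type*) (n : ℕ) : SymPow X n → SymPow (X ⊕ PUnit) n :=
  Quotient.map (fun y => Sum.inl ∘ y) (by rintro a b ⟨σ, rfl⟩; exact ⟨σ, rfl⟩)

lemma symEmb_mk (n : ℕ) (y : Fin n → X) :
    symEmb X n (Quotient.mk (symSetoid X n) y) =
      Quotient.mk (symSetoid (X ⊕ PUnit) n) (Sum.inl ∘ y) := rfl

lemma measurable_symEmb (X : Type*) [MeasurableSpace X] (n : ℕ) :
    Measurable (symEmb X n) := by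
  refine measurable_of_symQuot ?_
  exact (measurable_symMk (X ⊕ PUnit) n).comp
    (measurable_pi_lambda _ fun i => measurable_inl.comp (measurable_pi_apply i))

/-- Extension-by-zero of a kernel on the `k`-th component of the sigma type. -/
noncomputable def sigmaSlice {X : Type*} [MeasurableSpace X] {Y : Type*} [MeasurableSpace Y]
    (k : ℕ) (κ : Kernel (SymPow (X ⊕ PUnit) k) Y) : Kernel (Σ k' : ℕ, SymPow X k') Y where
  toFun p := if hp : p.1 = k then κ (symEmb X k (hp ▸ p.2)) else 0
  measurable' := by
    refine measurable_of_sigma fun k' => ?_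
    rcases eq_or_ne k' k with rfl | hne
    · have hrw : (fun z : SymPow X k' =>
          if hp : k' = k' then κ (symEmb X k' (hp ▸ z)) else 0) =
          fun z => κ (symEmb X k' z) := funext fun z => dif_pos rfl
      rw [hrw]
      exact κ.measurable.comp (measurable_symEmb X k')
    · have hrw : (fun z : SymPow X k' =>
          if hp : k' = k then κ (symEmb X k (hp ▸ z)) else 0) =
          fun _ => (0 : Measure Y) := funext fun z => dif_neg hne
      rw [hrw]
      exact measurable_const

lemma sigmaSlice_apply_self {X : Type*} [MeasurableSpace X] {Y : Type*} [MeasurableSpace Y]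
    (k : ℕ) (κ : Kernel (SymPow (X ⊕ PUnit) k) Y) (m : SymPow X k) :
    sigmaSlice k κ ⟨k, m⟩ = κ (symEmb X k m) := dif_pos rfl

lemma sigmaSlice_apply_ne {X : Type*} [MeasurableSpace X] {Y : Type*} [MeasurableSpace Y]
    (k : ℕ) (κ : Kernel (SymPow (X ⊕ PUnit) k) Y) (p : Σ k' : ℕ, SymPow X k')
    (hp : p.1 ≠ k) : sigmaSlice k κ p = 0 := dif_neg hp

instance isFiniteKernel_sigmaSlice {X : Type*} [MeasurableSpace X] {Y : Type*}
    [MeasurableSpace Y] (k : ℕ) (κ : Kernel (SymPow (X ⊕ PUnit) k) Y) [IsFiniteKernel κ] :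
    IsFiniteKernel (sigmaSlice k κ) := by
  refine ⟨⟨Kernel.bound κ, Kernel.bound_lt_top κ, fun p => ?_⟩⟩
  rcases p with ⟨k', m⟩
  rcases eq_or_ne k' k with rfl | hne
  · rw [sigmaSlice_apply_self]
    exact Kernel.measure_le_bound κ _ _
  · rw [sigmaSlice_apply_ne k κ _ hne]
    simp

end BangAux

open BangAux

/-- `!X := Σ k, X^{(k)}`, with the maps `h n` (which are measurable, as are
the maps `r n` adding a root to a rooted symmetric power), is the limit of the sequential
diagram of the rooted symmetric powers `(X ⊕ PUnit)^{(n)}` in the opposite category of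
s-finite transition kernels: every cone `(τ_n)` of s-finite kernels (i.e. satisfying
`τ_{n+1} ∘ r_n = τ_n` pointwise) factors uniquely through `!X`, and the mediating kernel
is s-finite. -/
theorem bang_limit_of_kernels
    (X : Type*) [MeasurableSpace X]
    (r : ∀ n : ℕ, SymPow (X ⊕ PUnit) n → SymPow (X ⊕ PUnit) (n + 1))
    (hr : ∀ (n : ℕ) (x : Fin n → X ⊕ PUnit),
      r n (Quotient.mk (symSetoid (X ⊕ PUnit) n) x) =
        Quotient.mk (symSetoid (X ⊕ PUnit) (n + 1)) (Fin.snoc x (Sum.inr PUnit.unit)))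
    (h : ∀ n : ℕ, SymPow (X ⊕ PUnit) n → Σ k : ℕ, SymPow X k)
    (hh : ∀ (n k : ℕ) (hk : k ≤ n) (y : Fin k → X),
      h n (Quotient.mk (symSetoid (X ⊕ PUnit) n)
          (fun i : Fin n =>
            if hi : (i : ℕ) < k then Sum.inl (y ⟨i, hi⟩) else Sum.inr PUnit.unit)) =
        ⟨k, Quotient.mk (symSetoid X k) y⟩)
    (Y : Type*) [MeasurableSpace Y]
    (τn : ∀ n : ℕ, Kernel (SymPow (X ⊕ PUnit) n) Y)
    [∀ n, IsSFiniteKernel (τn n)]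
    (hcone : ∀ (n : ℕ) (m : SymPow (X ⊕ PUnit) n), τn (n + 1) (r n m) = τn n m) :
    (∀ n, Measurable (r n)) ∧ (∀ n, Measurable (h n)) ∧
      (∃! τ : Kernel (Σ k : ℕ, SymPow X k) Y,
        ∀ (n : ℕ) (m : SymPow (X ⊕ PUnit) n), τ (h n m) = τn n m) ∧
      ∀ τ : Kernel (Σ k : ℕ, SymPow X k) Y,
        (∀ (n : ℕ) (m : SymPow (X ⊕ PUnit) n), τ (h n m) = τn n m) →
        IsSFiniteKernel τ := by
  classical
  -- measurability of r
  have hrmeas : ∀ n, Measurable (r n) := by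
    intro n
    refine measurable_of_symQuot ?_
    have : (fun x : Fin n → X ⊕ PUnit => r n (Quotient.mk (symSetoid (X ⊕ PUnit) n) x)) =
        fun x => Quotient.mk (symSetoid (X ⊕ PUnit) (n + 1)) (Fin.snoc x (Sum.inr PUnit.unit)) :=
      funext fun x => hr n x
    rw [this]
    refine (measurable_symMk (X ⊕ PUnit) (n + 1)).comp ?_
    refine measurable_pi_lambda _ fun i => ?_
    refine Fin.lastCases ?_ (fun j => ?_) i
    · simp only [Fin.snoc_last]; exact measurable_const
    · simp only [Fin.snoc_castSucc]; exact measurable_pi_apply j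
  -- key decomposition: every element has a sorted representative
  have decomp : ∀ (n : ℕ) (x : Fin n → X ⊕ PUnit), ∃ k, k ≤ n ∧ ∃ y : Fin k → X,
      Quotient.mk (symSetoid (X ⊕ PUnit) n) x =
        Quotient.mk (symSetoid (X ⊕ PUnit) n) (sorted X n k y) := by
    intro n x
    set S : Finset (Fin n) := Finset.univ.filter (fun i => (x i).isLeft) with hSdef
    have hS : ∀ i, i ∈ S ↔ (x i).isLeft := by
      intro i; simp [hSdef]
    have hmem : ∀ j : Fin S.card, (x ((S.orderIsoOfFin rfl j) : Fin n)).isLeft :=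
      fun j => (hS _).mp (S.orderIsoOfFin rfl j).2
    refine ⟨S.card, by simpa using S.card_le_univ, fun j => (x _).getLeft (hmem j), ?_⟩
    refine symMk_sorted_eq n S.card x S hS rfl _ (fun j => ?_)
    exact Sum.eq_left_iff_getLeft_eq.mpr ⟨hmem j, rfl⟩
  -- measurability of h
  have hhmeas : ∀ n, Measurable (h n) := by
    intro n
    rcases isEmpty_or_nonempty X with hX | hX
    · -- X empty: h n is constant
      have hx : ∀ x : Fin n → X ⊕ PUnit, x = fun _ => Sum.inr PUnit.unit := by
        intro x; funext i
        cases hxi : x i with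
        | inl a => exact (IsEmpty.false a).elim
        | inr u => cases u; rfl
      have : h n = fun _ => h n (Quotient.mk (symSetoid (X ⊕ PUnit) n)
          (fun _ => Sum.inr PUnit.unit)) := by
        funext m
        obtain ⟨x, rfl⟩ := Quotient.exists_rep m
        rw [show Quotient.mk (symSetoid (X ⊕ PUnit) n) x =
          Quotient.mk (symSetoid (X ⊕ PUnit) n) (fun _ => Sum.inr PUnit.unit) from by
            rw [← hx x]]
      rw [this]
      exact measurable_const
    · -- X nonempty
      set x₀ : X := Classical.arbitrary X
      set ext : Finset (Fin n) → (Fin n → X ⊕ PUnit) → (Σ k : ℕ, SymPow X k) :=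
        fun S x => ⟨S.card, Quotient.mk (symSetoid X S.card)
          (fun j => Sum.elim id (fun _ => x₀) (x (S.orderIsoOfFin rfl j)))⟩ with hextdef
      have hextmeas : ∀ S : Finset (Fin n), Measurable (ext S) := by
        intro S
        refine (measurable_sigmaMk' S.card).comp ?_
        refine (measurable_symMk X S.card).comp ?_
        refine measurable_pi_lambda _ fun j => ?_
        exact (measurable_id.sumElim measurable_const).comp (measurable_pi_apply _)
      have hext : ∀ (S : Finset (Fin n)) (x : Fin n → X ⊕ PUnit),
          (∀ i, i ∈ S ↔ (x i).isLeft) →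
          h n (Quotient.mk (symSetoid (X ⊕ PUnit) n) x) = ext S x := by
        intro S x hS
        have hy : ∀ j : Fin S.card, x (S.orderIsoOfFin rfl j) =
            Sum.inl (Sum.elim id (fun _ => x₀) (x (S.orderIsoOfFin rfl j))) := by
          intro j
          have hmem : (x ((S.orderIsoOfFin rfl j) : Fin n)).isLeft :=
            (hS _).mp (S.orderIsoOfFin rfl j).2
          rcases hxe : x ((S.orderIsoOfFin rfl j) : Fin n) with a | u
          · rfl
          · rw [hxe] at hmem; simp at hmem
        rw [symMk_sorted_eq n S.card x S hS rfl _ hy, hextdef]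
        show h n (Quotient.mk (symSetoid (X ⊕ PUnit) n)
            (sorted X n S.card (fun j => Sum.elim id (fun _ => x₀) (x (S.orderIsoOfFin rfl j))))) =
          (⟨S.card, Quotient.mk (symSetoid X S.card)
            (fun j => Sum.elim id (fun _ => x₀) (x (S.orderIsoOfFin rfl j)))⟩ : Σ k : ℕ, SymPow X k)
        exact hh n S.card (by simpa using S.card_le_univ)
          (fun j => Sum.elim id (fun _ => x₀) (x (S.orderIsoOfFin rfl j)))
      refine measurable_of_symQuot ?_
      intro t ht
      have key : (fun x : Fin n → X ⊕ PUnit =>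
          h n (Quotient.mk (symSetoid (X ⊕ PUnit) n) x)) ⁻¹' t =
          ⋃ S : Finset (Fin n),
            {x : Fin n → X ⊕ PUnit | ∀ i, i ∈ S ↔ (x i).isLeft} ∩ ext S ⁻¹' t := by
        ext x
        simp only [Set.mem_preimage, Set.mem_iUnion, Set.mem_inter_iff, Set.mem_setOf_eq]
        constructor
        · intro hx
          refine ⟨Finset.univ.filter (fun i => (x i).isLeft), fun i => by simp, ?_⟩
          rw [← hext _ x (fun i => by simp)]
          exact hx
        · rintro ⟨S, hS, hgt⟩
          rw [hext S x hS]
          exact hgt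
      rw [key]
      refine MeasurableSet.iUnion fun S => MeasurableSet.inter ?_ (hextmeas S ht)
      have hisLeft : MeasurableSet {v : X ⊕ PUnit | v.isLeft} := by
        rw [show {v : X ⊕ PUnit | v.isLeft} = Set.range Sum.inl from by
          ext v; cases v <;> simp]
        exact measurableSet_range_inl
      rw [show {x : Fin n → X ⊕ PUnit | ∀ i, i ∈ S ↔ (x i).isLeft} =
          ⋂ i, {x : Fin n → X ⊕ PUnit | i ∈ S ↔ (x i).isLeft} from by
        ext x; simp]
      refine MeasurableSet.iInter fun i => ?_
      by_cases hi : i ∈ S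
      · rw [show {x : Fin n → X ⊕ PUnit | i ∈ S ↔ (x i).isLeft} =
            (fun x : Fin n → X ⊕ PUnit => x i) ⁻¹' {v | v.isLeft} from by
          ext x; simp [hi]]
        exact measurable_pi_apply i hisLeft
      · rw [show {x : Fin n → X ⊕ PUnit | i ∈ S ↔ (x i).isLeft} =
            ((fun x : Fin n → X ⊕ PUnit => x i) ⁻¹' {v | v.isLeft})ᶜ from by
          ext x; simp [hi]]
        exact (measurable_pi_apply i hisLeft).compl
  -- the step lemma: evaluating the cone at a sorted representative
  have step : ∀ (n k : ℕ), k ≤ n → ∀ y : Fin k → X,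
      τn n (Quotient.mk (symSetoid (X ⊕ PUnit) n) (sorted X n k y)) =
        τn k (symEmb X k (Quotient.mk (symSetoid X k) y)) := by
    intro n
    induction n with
    | zero =>
      intro k hk y
      have hk0 : k = 0 := Nat.le_zero.mp hk
      subst hk0
      rw [symEmb_mk]
      rw [show sorted X 0 0 y = Sum.inl ∘ y from funext fun i => i.elim0]
    | succ n ih =>
      intro k hk y
      rcases eq_or_lt_of_le hk with rfl | hlt
      · rw [symEmb_mk]
        rw [show sorted X (n + 1) (n + 1) y = Sum.inl ∘ y from sorted_self (n + 1) y]
      · have hk' : k ≤ n := Nat.lt_succ_iff.mp hlt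
        rw [← snoc_sorted n k hk' y, ← hr]
        exact (hcone n _).trans (ih k hk' y)
  -- the mediating kernel
  set τ : Kernel (Σ k : ℕ, SymPow X k) Y :=
    { toFun := fun p => τn p.1 (symEmb X p.1 p.2)
      measurable' := measurable_of_sigma fun k =>
        (τn k).measurable.comp (measurable_symEmb X k) } with hτdef
  have hτapp : ∀ p : Σ k : ℕ, SymPow X k, τ p = τn p.1 (symEmb X p.1 p.2) := fun _ => rfl
  have hτ : ∀ (n : ℕ) (m : SymPow (X ⊕ PUnit) n), τ (h n m) = τn n m := by
    intro n m
    obtain ⟨x, rfl⟩ := Quotient.exists_rep m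
    obtain ⟨k, hk, y, hxy⟩ := decomp n x
    rw [show (Quotient.mk (symSetoid (X ⊕ PUnit) n) x : SymPow (X ⊕ PUnit) n) =
      Quotient.mk (symSetoid (X ⊕ PUnit) n) (sorted X n k y) from hxy]
    rw [hh n k hk y, step n k hk y]
    exact hτapp ⟨k, Quotient.mk (symSetoid X k) y⟩
  have huniq : ∀ τ' : Kernel (Σ k : ℕ, SymPow X k) Y,
      (∀ (n : ℕ) (m : SymPow (X ⊕ PUnit) n), τ' (h n m) = τn n m) → τ' = τ := by
    intro τ' hτ'
    refine Kernel.ext fun p => ?_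
    rcases p with ⟨k, m⟩
    obtain ⟨y, rfl⟩ := Quotient.exists_rep m
    rw [show (⟨k, Quotient.mk (symSetoid X k) y⟩ : Σ k : ℕ, SymPow X k) =
      h k (Quotient.mk (symSetoid (X ⊕ PUnit) k) (sorted X k k y)) from (hh k k le_rfl y).symm]
    exact (hτ' k _).trans (hτ k _).symm
  -- s-finiteness of the mediating kernel
  have hτsum : τ = Kernel.sum (fun q : ℕ × ℕ =>
      sigmaSlice q.1 (Kernel.seq (τn q.1) q.2)) := by
    refine Kernel.ext fun p => ?_
    rcases p with ⟨k, m⟩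
    refine Measure.ext fun s hs => ?_
    rw [Kernel.sum_apply' _ _ hs]
    rw [ENNReal.tsum_prod']
    rw [tsum_eq_single k (fun b hb => by
      simp only [sigmaSlice_apply_ne b _ ⟨k, m⟩ hb.symm]
      simp)]
    simp only [sigmaSlice_apply_self]
    rw [hτapp ⟨k, m⟩]
    conv_lhs => rw [← Kernel.kernel_sum_seq (τn k)]
    rw [Kernel.sum_apply' _ _ hs]
  have hsfin : IsSFiniteKernel τ := by
    rw [hτsum]
    exact Kernel.isSFiniteKernel_sum
  refine ⟨hrmeas, hhmeas, ⟨τ, hτ, huniq⟩, ?_⟩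
  intro τ' hτ'
  rw [huniq τ' hτ']
  exact hsfin
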